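/- Suppose the dependency digraph of a tabletop rearrangement instance with n ≥ 2 objects is strongly connected. Then the minimum number of pick-and-place actions over all plans for the instance equals n + ν, where ν is the minimum cardinality of a feedback vertex set of the dependency digraph. -/

import Mathlib

open Metric in
/-- A configuration of `n` unit-disc objects in the plane (modeled by `ℂ`) is feasible
if the closed unit discs centered at the object positions are pairwise disjoint. -/
def FeasibleConfig {n : ℕ} (c : Fin n → ℂ) : Prop :=
  ∀ i j : Fin n, i ≠ j → Disjoint (closedBall (c i) 1) (closedBall (c j) 1)

/-- A pick-and-place action changes the position of exactly one object. -/
def PickPlace {n : ℕ} (c c' : Fin n → ℂ) : Prop :=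
  ∃ i : Fin n, c' i ≠ c i ∧ ∀ j : Fin n, j ≠ i → c' j = c j

/-- `plan`, the list of configurations resulting from the successive pick-and-place
actions, is a plan transforming the start configuration `s` into the goal
configuration `g`: each action changes the position of exactly one object, each
resulting configuration is feasible, and the final configuration is the goal.  The
number of actions of the plan is `plan.length`. -/
def IsPlan {n : ℕ} (s g : Fin n → ℂ) (plan : List (Fin n → ℂ)) : Prop :=
  List.Chain PickPlace s plan ∧ (∀ c ∈ plan, FeasibleConfig c) ∧
    (s :: plan).getLast (by simp) = g

open Metric in
/-- The dependency digraph of the instance: an arc from `i` to `j` (for `i ≠ j`) exactly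
when the closed unit disc centered at `g i` intersects the closed unit disc centered at
`s j`. -/
def DepArc {n : ℕ} (s g : Fin n → ℂ) (i j : Fin n) : Prop :=
  i ≠ j ∧ (Metric.closedBall (g i) 1 ∩ Metric.closedBall (s j) 1).Nonempty

/-- `S` is a feedback vertex set of the digraph with arc relation `A`: the subdigraph
induced on the complement of `S` contains no directed cycle (no nontrivial closed
directed walk). -/
def IsFVS {V : Type*} (A : V → V → Prop) (S : Set V) : Prop :=
  ∀ x : V, ¬ Relation.TransGen (fun u v => A u v ∧ u ∉ S ∧ v ∉ S) x x

/-- `ν(D)`: the minimum cardinality of a feedback vertex set of the digraph with vertex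
type `V` and arc relation `A`. -/
noncomputable def nuFVS {V : Type*} (A : V → V → Prop) : ℕ :=
  sInf {k | ∃ S : Set V, IsFVS A S ∧ S.ncard = k}

/-! ### Geometry helpers -/

open Metric Finset

lemma disjoint_iff_two_lt (x y : ℂ) :
    Disjoint (closedBall x 1) (closedBall y 1) ↔ 2 < dist x y := by
  constructor
  · intro h
    by_contra hle
    push_neg at hle
    refine Set.not_disjoint_iff.2 ⟨midpoint ℝ x y, ?_, ?_⟩ h
    · simp [dist_left_midpoint]; linarith
    · simp [dist_midpoint_right]; linarith
  · intro h; exact closedBall_disjoint_closedBall (by linarith)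

lemma depArc_iff {n : ℕ} (s g : Fin n → ℂ) (i j : Fin n) :
    DepArc s g i j ↔ i ≠ j ∧ dist (g i) (s j) ≤ 2 := by
  constructor
  · rintro ⟨hij, z, hz1, hz2⟩
    refine ⟨hij, ?_⟩
    have h1 : dist z (g i) ≤ 1 := mem_closedBall.1 hz1
    have h2 : dist z (s j) ≤ 1 := mem_closedBall.1 hz2
    calc dist (g i) (s j) ≤ dist (g i) z + dist z (s j) := dist_triangle _ _ _
      _ ≤ 2 := by rw [dist_comm (g i) z]; linarith
  · rintro ⟨hij, hle⟩
    refine ⟨hij, midpoint ℝ (g i) (s j), ?_, ?_⟩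
    · simp [dist_left_midpoint]; linarith
    · simp [dist_midpoint_right]; linarith

/-- From strong connectivity: every object has an in-arc hence its start differs
from its goal. -/
lemma start_ne_goal {n : ℕ} (hn : 2 ≤ n) (s g : Fin n → ℂ)
    (hg : ∀ i j : Fin n, i ≠ j → Disjoint (closedBall (g i) 1) (closedBall (g j) 1))
    (hsc : ∀ u v : Fin n, Relation.ReflTransGen (DepArc s g) u v) :
    ∀ i, s i ≠ g i := by
  intro i hsg
  haveI : Nontrivial (Fin n) := Fin.nontrivial_iff_two_le.mpr hn
  obtain ⟨u, hu⟩ := exists_ne i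
  rcases (hsc u i).cases_tail with h | ⟨c, _, hc⟩
  · exact hu h.symm
  · have h1 := (depArc_iff s g c i).1 hc
    have h2 := (disjoint_iff_two_lt _ _).1 (hg c i h1.1)
    rw [hsg] at h1
    linarith [h1.2, h2]

/-! ### Segments of plans -/

def Seg {n : ℕ} (c d : Fin n → ℂ) (k : ℕ) : Prop :=
  ∃ l : List (Fin n → ℂ), List.Chain PickPlace c l ∧ (∀ x ∈ l, FeasibleConfig x) ∧
    (c :: l).getLast (by simp) = d ∧ l.length = k

lemma seg_refl {n : ℕ} (c : Fin n → ℂ) : Seg c c 0 :=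
  ⟨[], List.Chain.nil, by simp, by simp, rfl⟩

lemma chain_append' {n : ℕ} :
    ∀ (l₁ : List (Fin n → ℂ)) (c : Fin n → ℂ) (l₂ : List (Fin n → ℂ)),
      List.Chain PickPlace c l₁ →
      List.Chain PickPlace ((c :: l₁).getLast (by simp)) l₂ →
      List.Chain PickPlace c (l₁ ++ l₂) := by
  intro l₁
  induction l₁ with
  | nil => intro c l₂ _ h2; simpa using h2
  | cons a t ih =>
    intro c l₂ h1 h2
    simp only [List.Chain, List.chain_cons] at h1
    simp only [List.cons_append, List.Chain, List.chain_cons]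
    refine ⟨h1.1, ih a l₂ h1.2 ?_⟩
    have : ((c :: a :: t).getLast (by simp)) = ((a :: t).getLast (by simp)) := by
      rw [List.getLast_cons (by simp)]
    rwa [this] at h2

lemma getLast_append' {n : ℕ} (c d : Fin n → ℂ) (l₁ l₂ : List (Fin n → ℂ))
    (h : (c :: l₁).getLast (by simp) = d) :
    (c :: (l₁ ++ l₂)).getLast (by simp) = (d :: l₂).getLast (by simp) := by
  rcases l₂ with _ | ⟨x, t⟩
  · simpa using h
  · have h1 := List.getLast_append_of_ne_nil (l := c :: l₁) (l' := x :: t) (by simp) (by simp)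
    have h2 : (d :: x :: t).getLast (by simp) = (x :: t).getLast (by simp) :=
      List.getLast_cons (by simp)
    exact h1.trans h2.symm

lemma seg_trans {n : ℕ} {c d e : Fin n → ℂ} {k m : ℕ}
    (h1 : Seg c d k) (h2 : Seg d e m) : Seg c e (k + m) := by
  obtain ⟨l₁, hc1, hf1, hl1, hk1⟩ := h1
  obtain ⟨l₂, hc2, hf2, hl2, hk2⟩ := h2
  refine ⟨l₁ ++ l₂, ?_, ?_, ?_, by simp [hk1, hk2]⟩
  · exact chain_append' l₁ c l₂ hc1 (by rwa [hl1])
  · intro x hx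
    rcases List.mem_append.1 hx with h | h
    · exact hf1 x h
    · exact hf2 x h
  · rw [getLast_append' c d l₁ l₂ hl1]
    rcases l₂ with _ | ⟨x, t⟩
    · simp at hk2; subst hk2; simpa using hl2
    · rw [List.getLast_cons (by simp)]; exact hl2

lemma seg_step {n : ℕ} (c : Fin n → ℂ) (i : Fin n) (p : ℂ) (hne : p ≠ c i)
    (hfe : FeasibleConfig (Function.update c i p)) :
    Seg c (Function.update c i p) 1 := by
  refine ⟨[Function.update c i p], ?_, by simpa using hfe, by simp, rfl⟩
  refine List.Chain.cons ⟨i, by simpa using hne, fun j hj => Function.update_of_ne hj _ _⟩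
    List.Chain.nil

/-! ### The intermediate configurations of the constructed plan -/

section Upper

variable {n : ℕ} (s g b : Fin n → ℂ)

/-- Configuration where objects in `A` are at goals, objects in `B \ A` are at buffers,
and the rest are at starts. -/
def conf (A B : Finset (Fin n)) : Fin n → ℂ :=
  fun k => if k ∈ A then g k else if k ∈ B then b k else s k

variable {s g b}

variable
  (hss : ∀ i j : Fin n, i ≠ j → 2 < dist (s i) (s j))
  (hgg : ∀ i j : Fin n, i ≠ j → 2 < dist (g i) (g j))
  (hbs : ∀ i j : Fin n, 2 < dist (b i) (s j))
  (hbg : ∀ i j : Fin n, 2 < dist (b i) (g j))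
  (hbb : ∀ i j : Fin n, i ≠ j → 2 < dist (b i) (b j))
  (hgs : ∀ i j : Fin n, i ≠ j → ¬ DepArc s g i j → 2 < dist (g i) (s j))
  (hsg : ∀ i : Fin n, s i ≠ g i)

include hss hgg hbs hbg hbb hgs in
lemma feas_conf (A B : Finset (Fin n))
    (h : ∀ i ∈ A, ∀ j, j ∉ A → j ∉ B → ¬ DepArc s g i j) :
    FeasibleConfig (conf s g b A B) := by
  intro i j hij
  rw [disjoint_iff_two_lt]
  by_cases hiA : i ∈ A <;> by_cases hjA : j ∈ A <;>
    by_cases hiB : i ∈ B <;> by_cases hjB : j ∈ B <;>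
    simp only [conf, hiA, hjA, hiB, hjB, if_true, if_false] <;>
    first
      | exact hgg i j hij
      | exact hss i j hij
      | exact hbb i j hij
      | exact hbs i j
      | exact hbg i j
      | exact hgs i j hij (h i hiA j hjA hjB)
      | (rw [dist_comm]
         first
           | exact hbs j i
           | exact hbg j i
           | exact hgs j i hij.symm (h j hjA i hiA hiB))

variable (S : Finset (Fin n))

include hss hgg hbs hbg hbb hgs in
lemma phase1 : ∀ (k : ℕ) (B : Finset (Fin n)), B ⊆ S → (S \ B).card = k →
    Seg (conf s g b ∅ B) (conf s g b ∅ S) k := by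
  intro k
  induction k with
  | zero =>
    intro B hBS hcard
    have : B = S := Finset.Subset.antisymm hBS (fun x hx => by
      by_contra hxB
      exact absurd (Finset.card_eq_zero.1 hcard ▸ Finset.mem_sdiff.2 ⟨hx, hxB⟩)
        (by simp))
    rw [this]; exact seg_refl _
  | succ k ih =>
    intro B hBS hcard
    have hne : (S \ B).Nonempty := Finset.card_pos.1 (by omega)
    obtain ⟨m, hm⟩ := hne
    rw [Finset.mem_sdiff] at hm
    have hupd : Function.update (conf s g b ∅ B) m (b m) = conf s g b ∅ (insert m B) := by
      funext k'
      by_cases hk : k' = m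
      · subst hk; simp [conf, Function.update_self]
      · rw [Function.update_of_ne hk]
        simp [conf, Finset.mem_insert, hk]
    have hstep : Seg (conf s g b ∅ B) (conf s g b ∅ (insert m B)) 1 := by
      rw [← hupd]
      refine seg_step _ m (b m) ?_ ?_
      · simp only [conf, Finset.notMem_empty, if_false, hm.2]
        intro hbad
        have := hbs m m
        rw [hbad, dist_self] at this
        linarith
      · rw [hupd]
        exact feas_conf hss hgg hbs hbg hbb hgs ∅ (insert m B) (by simp)
    have hS : insert m B ⊆ S := Finset.insert_subset hm.1 hBS
    have hc : (S \ insert m B).card = k := by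
      rw [Finset.sdiff_insert, Finset.card_erase_of_mem (Finset.mem_sdiff.2 hm)]
      omega
    have := seg_trans hstep (ih (insert m B) hS hc)
    rwa [Nat.add_comm] at this

include hss hgg hbs hbg hbb hgs hsg in
lemma phase2 (hwf : WellFounded (fun u v : Fin n =>
      (DepArc s g v u ∧ v ∉ S ∧ u ∉ S))) :
    ∀ (k : ℕ) (A : Finset (Fin n)), A ⊆ Sᶜ → (Sᶜ \ A).card = k →
    (∀ i ∈ A, ∀ j, j ∉ A → j ∉ S → ¬ DepArc s g i j) →
    Seg (conf s g b A S) (conf s g b Sᶜ S) k := by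
  intro k
  induction k with
  | zero =>
    intro A hAS hcard _
    have : A = Sᶜ := Finset.Subset.antisymm hAS (fun x hx => by
      by_contra hxA
      exact absurd (Finset.card_eq_zero.1 hcard ▸ Finset.mem_sdiff.2 ⟨hx, hxA⟩)
        (by simp))
    rw [this]; exact seg_refl _
  | succ k ih =>
    intro A hAS hcard hA
    have hne : ((Sᶜ \ A : Finset (Fin n)) : Set (Fin n)).Nonempty :=
      Finset.coe_nonempty.2 (Finset.card_pos.1 (by omega))
    set m := hwf.min _ hne with hmdef
    have hmF : m ∈ Sᶜ \ A := hwf.min_mem _ hne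
    have hmin : ∀ x ∈ Sᶜ \ A, ¬ (DepArc s g m x ∧ m ∉ S ∧ x ∉ S) := by
      intro x hx
      exact hwf.not_lt_min _ hx
    rw [Finset.mem_sdiff, Finset.mem_compl] at hmF
    have hupd : Function.update (conf s g b A S) m (g m) = conf s g b (insert m A) S := by
      funext k'
      by_cases hk : k' = m
      · subst hk; simp [conf, Function.update_self]
      · rw [Function.update_of_ne hk]
        simp [conf, Finset.mem_insert, hk]
    have hA' : ∀ i ∈ insert m A, ∀ j, j ∉ insert m A → j ∉ S → ¬ DepArc s g i j := by
      intro i hi j hj1 hj2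
      rw [Finset.mem_insert] at hi
      rcases hi with rfl | hi
      · intro hdep
        exact hmin j (Finset.mem_sdiff.2 ⟨Finset.mem_compl.2 hj2,
          fun hjA => hj1 (Finset.mem_insert_of_mem hjA)⟩) ⟨hdep, hmF.1, hj2⟩
      · exact hA i hi j (fun hjA => hj1 (Finset.mem_insert_of_mem hjA)) hj2
    have hstep : Seg (conf s g b A S) (conf s g b (insert m A) S) 1 := by
      rw [← hupd]
      refine seg_step _ m (g m) ?_ ?_
      · simp only [conf, hmF.2, hmF.1, if_false]
        exact (hsg m).symm
      · rw [hupd]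
        exact feas_conf hss hgg hbs hbg hbb hgs (insert m A) S hA'
    have hS : insert m A ⊆ Sᶜ := Finset.insert_subset (Finset.mem_compl.2 hmF.1) hAS
    have hc : (Sᶜ \ insert m A).card = k := by
      rw [Finset.sdiff_insert, Finset.card_erase_of_mem
        (Finset.mem_sdiff.2 ⟨Finset.mem_compl.2 hmF.1, hmF.2⟩)]
      omega
    have := seg_trans hstep (ih (insert m A) hS hc hA')
    rwa [Nat.add_comm] at this

include hss hgg hbs hbg hbb hgs in
lemma phase3 : ∀ (k : ℕ) (A : Finset (Fin n)),
    Aᶜ.card = k → Seg (conf s g b A Aᶜ) (conf s g b Finset.univ ∅) k := by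
  intro k
  induction k with
  | zero =>
    intro A hcard
    have h1 : A = Finset.univ := by
      have : Aᶜ = ∅ := Finset.card_eq_zero.1 hcard
      rwa [Finset.compl_eq_empty_iff] at this
    subst h1
    rw [Finset.compl_univ]
    exact seg_refl _
  | succ k ih =>
    intro A hcard
    have hne : Aᶜ.Nonempty := Finset.card_pos.1 (by omega)
    obtain ⟨m, hm⟩ := hne
    rw [Finset.mem_compl] at hm
    have hupd : Function.update (conf s g b A Aᶜ) m (g m)
        = conf s g b (insert m A) (insert m A)ᶜ := by
      funext k'
      by_cases hk : k' = m
      · subst hk; simp [conf, Function.update_self]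
      · rw [Function.update_of_ne hk]
        simp only [conf, Finset.mem_insert, hk, false_or, Finset.mem_compl]
    have hstep : Seg (conf s g b A Aᶜ) (conf s g b (insert m A) (insert m A)ᶜ) 1 := by
      rw [← hupd]
      refine seg_step _ m (g m) ?_ ?_
      · have hcm : conf s g b A Aᶜ m = b m := by
          simp [conf, hm]
        rw [hcm]
        intro hbad
        have := hbg m m
        rw [← hbad, dist_self] at this
        linarith
      · rw [hupd]
        refine feas_conf hss hgg hbs hbg hbb hgs (insert m A) (insert m A)ᶜ ?_
        intro i _ j hj1 hj2
        exact absurd (Finset.mem_compl.2 hj1) hj2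
    have hc : ((insert m A)ᶜ).card = k := by
      rw [Finset.compl_insert, Finset.card_erase_of_mem (Finset.mem_compl.2 hm)]
      omega
    have := seg_trans hstep (ih (insert m A) hc)
    rwa [Nat.add_comm] at this

end Upper

open Metric in
lemma exists_plan_of_fvs {n : ℕ} (hn : 2 ≤ n) (s g : Fin n → ℂ)
    (hs : ∀ i j : Fin n, i ≠ j → Disjoint (closedBall (s i) 1) (closedBall (s j) 1))
    (hg : ∀ i j : Fin n, i ≠ j → Disjoint (closedBall (g i) 1) (closedBall (g j) 1))
    (hsc : ∀ u v : Fin n, Relation.ReflTransGen (DepArc s g) u v)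
    (S : Finset (Fin n)) (hFVS : IsFVS (DepArc s g) ↑S) :
    ∃ plan : List (Fin n → ℂ), IsPlan s g plan ∧ plan.length = n + S.card := by
  classical
  have hss : ∀ i j : Fin n, i ≠ j → 2 < dist (s i) (s j) :=
    fun i j hij => (disjoint_iff_two_lt _ _).1 (hs i j hij)
  have hgg : ∀ i j : Fin n, i ≠ j → 2 < dist (g i) (g j) :=
    fun i j hij => (disjoint_iff_two_lt _ _).1 (hg i j hij)
  have hgs : ∀ i j : Fin n, i ≠ j → ¬ DepArc s g i j → 2 < dist (g i) (s j) := by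
    intro i j hij hdep
    rw [depArc_iff] at hdep
    push_neg at hdep
    exact hdep hij
  have hsg : ∀ i : Fin n, s i ≠ g i := start_ne_goal hn s g hg hsc
  -- buffer positions
  obtain ⟨M0, hM0⟩ := Finite.exists_le (fun i : Fin n => max ‖s i‖ ‖g i‖)
  set M : ℝ := max M0 0 with hMdef
  have hM : ∀ i, ‖s i‖ ≤ M ∧ ‖g i‖ ≤ M := by
    intro i
    have := hM0 i
    constructor
    · exact le_trans (le_trans (le_max_left _ _) this) (le_max_left _ _)
    · exact le_trans (le_trans (le_max_right _ _) this) (le_max_left _ _)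
  have hMnn : (0:ℝ) ≤ M := le_max_right _ _
  set b : Fin n → ℂ := fun i => ((M + 3 + 5 * i.val : ℝ) : ℂ) with hbdef
  have hnb : ∀ i : Fin n, ‖b i‖ = M + 3 + 5 * i.val := by
    intro i
    rw [hbdef]
    rw [Complex.norm_real, Real.norm_eq_abs, abs_of_nonneg (by positivity)]
  have hbs : ∀ i j : Fin n, 2 < dist (b i) (s j) := by
    intro i j
    have h1 : ‖b i‖ - ‖s j‖ ≤ ‖b i - s j‖ := norm_sub_norm_le _ _
    rw [dist_eq_norm]
    have := (hM j).1
    have := hnb i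
    have : (0:ℝ) ≤ 5 * i.val := by positivity
    nlinarith [hnb i, (hM j).1]
  have hbg : ∀ i j : Fin n, 2 < dist (b i) (g j) := by
    intro i j
    have h1 : ‖b i‖ - ‖g j‖ ≤ ‖b i - g j‖ := norm_sub_norm_le _ _
    rw [dist_eq_norm]
    have : (0:ℝ) ≤ 5 * i.val := by positivity
    nlinarith [hnb i, (hM j).2]
  have hbb : ∀ i j : Fin n, i ≠ j → 2 < dist (b i) (b j) := by
    intro i j hij
    rw [hbdef]
    simp only []
    rw [dist_eq_norm, ← Complex.ofReal_sub, Complex.norm_real, Real.norm_eq_abs,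
      ← Real.dist_eq]
    have hne : (i.val : ℝ) ≠ (j.val : ℝ) := by
      exact_mod_cast fun h => hij (Fin.ext h)
    have h1 : (1:ℝ) ≤ |(i.val : ℝ) - (j.val : ℝ)| := by
      rcases lt_or_gt_of_ne hne with h | h
      · rw [abs_of_neg (by linarith)]
        have : (i.val : ℝ) + 1 ≤ j.val := by exact_mod_cast Nat.succ_le_of_lt (by exact_mod_cast h)
        linarith
      · rw [abs_of_pos (by linarith)]
        have : (j.val : ℝ) + 1 ≤ i.val := by exact_mod_cast Nat.succ_le_of_lt (by exact_mod_cast h)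
        linarith
    have h2 : dist (M + 3 + 5 * (i.val:ℝ)) (M + 3 + 5 * (j.val:ℝ))
        = 5 * |(i.val : ℝ) - (j.val : ℝ)| := by
      rw [Real.dist_eq, show M + 3 + 5 * (i.val:ℝ) - (M + 3 + 5 * (j.val:ℝ))
          = 5 * ((i.val:ℝ) - j.val) by ring, abs_mul,
        abs_of_nonneg (by norm_num : (0:ℝ) ≤ 5)]
    rw [h2]
    linarith
  -- well-foundedness for the topological order
  have hirr : ∀ x : Fin n, ¬ Relation.TransGen
      (fun u v => DepArc s g u v ∧ u ∉ S ∧ v ∉ S) x x := by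
    intro x hx
    refine hFVS x ?_
    refine Relation.TransGen.mono ?_ _ _ hx
    intro u v huv
    simpa using huv
  have hwf : WellFounded (fun u v : Fin n => (DepArc s g v u ∧ v ∉ S ∧ u ∉ S)) := by
    have hq : WellFounded (fun u v : Fin n => Relation.TransGen
        (fun a c => DepArc s g a c ∧ a ∉ S ∧ c ∉ S) v u) := by
      haveI : IsTrans (Fin n) (fun u v : Fin n => Relation.TransGen
          (fun a c => DepArc s g a c ∧ a ∉ S ∧ c ∉ S) v u) :=
        ⟨fun _ _ _ h1 h2 => h2.trans h1⟩
      haveI : IsIrrefl (Fin n) (fun u v : Fin n => Relation.TransGen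
          (fun a c => DepArc s g a c ∧ a ∉ S ∧ c ∉ S) v u) :=
        ⟨fun x h => hirr x h⟩
      exact Finite.wellFounded_of_trans_of_irrefl _
    exact Subrelation.wf
      (r := fun u v : Fin n => Relation.TransGen
        (fun a c => DepArc s g a c ∧ a ∉ S ∧ c ∉ S) v u)
      (fun hab => Relation.TransGen.single hab) hq
  -- assemble the three phases
  have hseg1 := phase1 hss hgg hbs hbg hbb hgs S S.card ∅ (Finset.empty_subset _) (by simp)
  have hseg2 := phase2 hss hgg hbs hbg hbb hgs hsg S hwf Sᶜ.card ∅
    (Finset.empty_subset _) (by simp) (by simp)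
  have hseg3' := phase3 hss hgg hbs hbg hbb hgs S.card Sᶜ (by rw [compl_compl])
  have hseg3 : Seg (conf s g b Sᶜ S) (conf s g b Finset.univ ∅) S.card := by
    rwa [compl_compl] at hseg3'
  have hconf0 : conf s g b ∅ ∅ = s := by
    funext k; simp [conf]
  have hconfend : conf s g b Finset.univ ∅ = g := by
    funext k; simp [conf]
  have htotal := seg_trans (seg_trans hseg1 hseg2) hseg3
  rw [hconf0, hconfend] at htotal
  obtain ⟨l, hchain, hfe, hlast, hlen⟩ := htotal
  refine ⟨l, ⟨hchain, hfe, hlast⟩, ?_⟩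
  rw [hlen]
  have h1 : Sᶜ.card = n - S.card := by
    rw [Finset.card_compl, Fintype.card_fin]
  have h2 : S.card ≤ n := by
    simpa using Finset.card_le_univ S
  omega

lemma getD_length_eq_getLast {α : Type*} : ∀ (l : List α) (a d : α),
    (a :: l).getD l.length d = (a :: l).getLast (by simp)
  | [], a, d => rfl
  | x :: t, a, d => by
    rw [show (a :: x :: t).getD (x :: t).length d = (x :: t).getD t.length d from rfl,
      getD_length_eq_getLast t x d]
    exact (List.getLast_cons (by simp)).symm

open Metric in
lemma length_lower_bound {n : ℕ} (hn : 2 ≤ n) (s g : Fin n → ℂ)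
    (hg : ∀ i j : Fin n, i ≠ j → Disjoint (closedBall (g i) 1) (closedBall (g j) 1))
    (hsc : ∀ u v : Fin n, Relation.ReflTransGen (DepArc s g) u v)
    (plan : List (Fin n → ℂ)) (hplan : IsPlan s g plan) :
    n + nuFVS (DepArc s g) ≤ plan.length := by
  classical
  obtain ⟨hchain, hfeas, hlast⟩ := hplan
  set L := plan.length with hL
  set c : ℕ → (Fin n → ℂ) := fun t => (s :: plan).getD t g with hcdef
  have hc0 : c 0 = s := rfl
  have hgetc : ∀ t (h : t < L), c (t + 1) = plan.get ⟨t, h⟩ := by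
    intro t h
    show (s :: plan).getD (t + 1) g = _
    rw [List.getD_eq_getElem (l := s :: plan) (n := t + 1) (hn := by show t + 1 < plan.length + 1; omega)]
    rfl
  have hstep : ∀ t, t < L → PickPlace (c t) (c (t + 1)) := by
    have h : (∀ h : 0 < plan.length, PickPlace s (plan.get ⟨0, h⟩)) ∧
        ∀ (i : ℕ) (h : i < plan.length - 1),
          PickPlace (plan.get ⟨i, by omega⟩) (plan.get ⟨i + 1, by omega⟩) := by
      have hc := List.isChain_iff_getElem.1 hchain
      exact ⟨fun h0 => hc 0 (by simp; omega), fun i hi => hc (i + 1) (by simp; omega)⟩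
    intro t ht
    rcases t with _ | u
    · rw [hc0, hgetc 0 ht]
      exact h.1 ht
    · rw [hgetc u (by omega), hgetc (u + 1) ht]
      exact h.2 u (by omega)
  have hfeasg : FeasibleConfig g := fun i j hij => hg i j hij
  have hfeasc : ∀ t, 1 ≤ t → FeasibleConfig (c t) := by
    intro t ht
    rcases t with _ | u
    · omega
    · by_cases hu : u < L
      · rw [hgetc u hu]
        exact hfeas _ (plan.get_mem _)
      · have : c (u + 1) = g := List.getD_eq_default _ _ (by simp [hL]; omega)
        rw [this]; exact hfeasg
  have hcL : c L = g := by
    have h1 : c L = (s :: plan).getD plan.length g := rfl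
    rw [h1, getD_length_eq_getLast, hlast]
  have hsne : ∀ i, s i ≠ g i := start_ne_goal hn s g hg hsc
  -- the object moved by each action
  set mv : Fin L → Fin n := fun t => (hstep t t.2).choose with hmvdef
  have hmv1 : ∀ t : Fin L, c (t + 1) (mv t) ≠ c t (mv t) :=
    fun t => (hstep t t.2).choose_spec.1
  have hmv2 : ∀ t : Fin L, ∀ j, j ≠ mv t → c (t + 1) j = c t j :=
    fun t => (hstep t t.2).choose_spec.2
  have unchanged : ∀ (b : ℕ), b ≤ L → ∀ a, a ≤ b → ∀ i,
      (∀ t (ht : t < L), a ≤ t → t < b → mv ⟨t, ht⟩ ≠ i) → c a i = c b i := by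
    intro b
    induction b with
    | zero => intro _ a ha i _; interval_cases a; rfl
    | succ b ih =>
      intro hbL a ha i hmv
      rcases Nat.eq_or_lt_of_le ha with rfl | hab
      · rfl
      · have h1 : c a i = c b i := ih (by omega) a (by omega) i
          (fun t ht h1 h2 => hmv t ht h1 (by omega))
        have h2 : c (b + 1) i = c b i := by
          have hbL' : b < L := by omega
          exact hmv2 ⟨b, hbL'⟩ i (Ne.symm (hmv b hbL' (by omega) (by omega)))
        rw [h1, h2]
  set F : Fin n → Finset (Fin L) :=
    fun i => Finset.univ.filter (fun t => mv t = i) with hFdef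
  have hsum : ∑ i : Fin n, (F i).card = L := by
    have := Finset.card_eq_sum_card_fiberwise
      (f := mv) (s := Finset.univ) (t := Finset.univ) (fun x _ => Finset.mem_univ _)
    simpa using this.symm
  have hFne : ∀ i, (F i).Nonempty := by
    intro i
    rw [Finset.nonempty_iff_ne_empty]
    intro hF
    have : c 0 i = c L i := unchanged L le_rfl 0 (Nat.zero_le _) i (by
      intro t ht _ _ hmvt
      have : (⟨t, ht⟩ : Fin L) ∈ F i := Finset.mem_filter.2 ⟨Finset.mem_univ _, hmvt⟩
      rw [hF] at this
      exact absurd this (Finset.notMem_empty _))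
    rw [hc0, hcL] at this
    exact hsne i this
  set τ : Fin n → Fin L := fun i => (F i).min' (hFne i) with hτdef
  have hτmem : ∀ i, mv (τ i) = i := by
    intro i
    have := (F i).min'_mem (hFne i)
    exact (Finset.mem_filter.1 this).2
  set Sbig : Finset (Fin n) := Finset.univ.filter (fun i => 2 ≤ (F i).card) with hSdef
  have huniq : ∀ i, i ∉ Sbig → ∀ t ∈ F i, t = τ i := by
    intro i hi t ht
    have hcard : (F i).card ≤ 1 := by
      by_contra hc
      exact hi (Finset.mem_filter.2 ⟨Finset.mem_univ _, by omega⟩)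
    exact Finset.card_le_one.1 hcard t ht _ ((F i).min'_mem (hFne i))
  have at_start : ∀ i, i ∉ Sbig → ∀ a, a ≤ (τ i : ℕ) → c a i = s i := by
    intro i hi a haτ
    have : c 0 i = c a i := by
      refine unchanged a (by have := (τ i).2; omega) 0 (Nat.zero_le _) i ?_
      intro t ht _ htb hmvt
      have := huniq i hi ⟨t, ht⟩ (Finset.mem_filter.2 ⟨Finset.mem_univ _, hmvt⟩)
      have : t = (τ i : ℕ) := congrArg Fin.val this
      omega
    rw [← this, hc0]
  have at_goal : ∀ i, i ∉ Sbig → ∀ a, (τ i : ℕ) < a → a ≤ L → c a i = g i := by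
    intro i hi a haτ haL
    have : c a i = c L i := by
      refine unchanged L le_rfl a haL i ?_
      intro t ht hta _ hmvt
      have := huniq i hi ⟨t, ht⟩ (Finset.mem_filter.2 ⟨Finset.mem_univ _, hmvt⟩)
      have : t = (τ i : ℕ) := congrArg Fin.val this
      omega
    rw [this, hcL]
  have key : ∀ i j, i ∉ Sbig → j ∉ Sbig → DepArc s g i j → (τ j : ℕ) < (τ i : ℕ) := by
    intro i j hi hj hdep
    by_contra hle
    push_neg at hle
    have hij : i ≠ j := hdep.1
    have hτne : (τ i : ℕ) ≠ (τ j : ℕ) := by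
      intro h
      have : τ i = τ j := Fin.ext h
      exact hij (by rw [← hτmem i, this, hτmem j])
    have hτlt : (τ i : ℕ) < (τ j : ℕ) := by omega
    set a := (τ i : ℕ) + 1 with hadef
    have haL : a ≤ L := by have := (τ j).2; omega
    have hci : c a i = g i := at_goal i hi a (by omega) haL
    have hcj : c a j = s j := at_start j hj a (by omega)
    have hfa := hfeasc a (by omega) i j hij
    rw [hci, hcj, disjoint_iff_two_lt] at hfa
    have := ((depArc_iff s g i j).1 hdep).2
    linarith
  have hFVS : IsFVS (DepArc s g) ↑Sbig := by
    intro x hx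
    have key2 : ∀ y, Relation.TransGen
        (fun u v => DepArc s g u v ∧ u ∉ (↑Sbig : Set (Fin n)) ∧ v ∉ ↑Sbig) x y →
        (τ y : ℕ) < (τ x : ℕ) := by
      intro y hy
      induction hy with
      | single h => exact key _ _ (by simpa using h.2.1) (by simpa using h.2.2) h.1
      | tail h1 h2 ih =>
        have := key _ _ (by simpa using h2.2.1) (by simpa using h2.2.2) h2.1
        omega
    exact absurd (key2 x hx) (by omega)
  have hν : nuFVS (DepArc s g) ≤ Sbig.card :=
    Nat.sInf_le ⟨↑Sbig, hFVS, Set.ncard_coe_finset _⟩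
  have hbound : ∀ i ∈ Finset.univ, (if i ∈ Sbig then 2 else 1) ≤ (F i).card := by
    intro i _
    split_ifs with h
    · exact (Finset.mem_filter.1 h).2
    · exact Finset.card_pos.2 (hFne i)
  have hsum2 : ∑ i : Fin n, (if i ∈ Sbig then 2 else 1) = n + Sbig.card := by
    calc ∑ i : Fin n, (if i ∈ Sbig then 2 else 1)
        = ∑ i : Fin n, (1 + if i ∈ Sbig then 1 else 0) := by
          refine Finset.sum_congr rfl fun i _ => ?_
          split_ifs <;> rfl
      _ = n + Sbig.card := by
          rw [Finset.sum_add_distrib]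
          congr 1
          · simp
          · rw [Finset.sum_ite_mem, Finset.univ_inter]
            simp
  have : n + Sbig.card ≤ L := by
    rw [← hsum, ← hsum2]
    exact Finset.sum_le_sum hbound
  omega

open Metric in
/-- If the dependency digraph of a tabletop rearrangement instance with `n ≥ 2` objects
is strongly connected, then the minimum number of pick-and-place actions over all plans
equals `n + ν`, where `ν` is the minimum cardinality of a feedback vertex set of the
dependency digraph. -/
theorem stmt_15 {n : ℕ} (hn : 2 ≤ n) (s g : Fin n → ℂ)
    (hs : ∀ i j : Fin n, i ≠ j → Disjoint (closedBall (s i) 1) (closedBall (s j) 1))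
    (hg : ∀ i j : Fin n, i ≠ j → Disjoint (closedBall (g i) 1) (closedBall (g j) 1))
    (hsc : ∀ u v : Fin n, Relation.ReflTransGen (DepArc s g) u v) :
    IsLeast {k : ℕ | ∃ plan : List (Fin n → ℂ), IsPlan s g plan ∧ plan.length = k}
      (n + nuFVS (DepArc s g)) := by
  classical
  constructor
  · have hne : {k | ∃ S : Set (Fin n), IsFVS (DepArc s g) S ∧ S.ncard = k}.Nonempty := by
      refine ⟨n, Set.univ, ?_, by simp [Set.ncard_univ]⟩
      intro x hx
      cases hx with
      | single h => exact h.2.1 (Set.mem_univ _)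
      | tail _ h => exact h.2.1 (Set.mem_univ _)
    obtain ⟨S₀, hS₀, hcard⟩ := Nat.sInf_mem hne
    have hfin : S₀.Finite := Set.toFinite _
    set S := hfin.toFinset with hSdef
    have hcoe : (↑S : Set (Fin n)) = S₀ := hfin.coe_toFinset
    have hcardS : S.card = nuFVS (DepArc s g) := by
      rw [← hcoe, Set.ncard_coe_finset] at hcard
      exact hcard
    obtain ⟨plan, hplan, hlen⟩ := exists_plan_of_fvs hn s g hs hg hsc S (hcoe ▸ hS₀)
    exact ⟨plan, hplan, by rw [hlen, hcardS]⟩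
  · rintro k ⟨plan, hplan, rfl⟩
    exact length_lower_bound hn s g hg hsc plan hplan
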